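/- arXiv:1306.6232 — 2 statements merged into one kernel-verified Lean document; each statement's English description precedes it below -/
import Mathlib

section
/- Let S = {a_1, …, a_m} be an alphabet of m distinct letters and r_1, …, r_m fixed nonnegative integers. For each k ≥ 0 let n_k be the number of factorizations on S with exactly k parts such that each part is a Carlitz word and the letter a_i is used exactly r_i times for each i. Then ∏_{i=1}^m l_{r_i}(t) = Σ_{k≥0} n_k · l_k(t) in ℝ[t] (the sum is finite since n_k = 0 for k > r_1 + … + r_m). -/
/-- The Laguerre-type polynomial `l_k(t)`: `l_0 = 1` and for `k ≥ 1`,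
`l_k(t) = Σ_{i=1}^{k} (−1)^{k−i} C(k−1, i−1) t^i / i!`. -/
noncomputable def lag (k : ℕ) : Polynomial ℝ :=
  if k = 0 then 1
  else ∑ i ∈ Finset.Icc 1 k,
    Polynomial.C ((-1 : ℝ) ^ (k - i) * (Nat.choose (k - 1) (i - 1)) / (Nat.factorial i)) *
      Polynomial.X ^ i

open Polynomial Finset

noncomputable def Bmap (f : ℝ[X]) : ℝ[X] := f.sum fun j a => C (a / j.factorial) * X ^ j

lemma coeff_Bmap (f : ℝ[X]) (n : ℕ) : (Bmap f).coeff n = f.coeff n / n.factorial := by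
  rw [Bmap, coeff_sum]
  rw [Polynomial.sum_def]
  have : ∀ j ∈ f.support, (C (f.coeff j / j.factorial) * X ^ j).coeff n
      = if j = n then f.coeff j / j.factorial else 0 := by
    intro j _
    rw [coeff_C_mul, coeff_X_pow]
    by_cases h : j = n
    · simp [h]
    · rw [if_neg h, if_neg (fun hh : n = j => h hh.symm), mul_zero]
  rw [Finset.sum_congr rfl this, Finset.sum_ite_eq' f.support n]
  split
  · rfl
  · rw [Polynomial.notMem_support_iff.mp (by assumption), zero_div]

lemma Bmap_add (f g : ℝ[X]) : Bmap (f + g) = Bmap f + Bmap g := by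
  ext n; simp [coeff_Bmap, add_div]

lemma Bmap_zero : Bmap 0 = 0 := by ext n; simp [coeff_Bmap]

lemma Bmap_smul (a : ℝ) (f : ℝ[X]) : Bmap (a • f) = a • Bmap f := by
  ext n; simp [coeff_Bmap, mul_div_assoc]

lemma Bmap_sum {ι : Type*} (s : Finset ι) (f : ι → ℝ[X]) :
    Bmap (∑ i ∈ s, f i) = ∑ i ∈ s, Bmap (f i) := by
  classical
  induction s using Finset.induction_on with
  | empty => simp [Bmap_zero]
  | insert _ _ h ih => rw [Finset.sum_insert h, Bmap_add, ih, Finset.sum_insert h]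

lemma Bmap_one : Bmap 1 = 1 := by
  ext n; simp only [coeff_Bmap, coeff_one]
  split <;> simp_all

lemma derivative_Bmap_X_mul (f : ℝ[X]) : derivative (Bmap (X * f)) = Bmap f := by
  ext n
  rw [coeff_derivative, coeff_Bmap, coeff_Bmap, coeff_X_mul, Nat.factorial_succ]
  have h1 : ((n+1 : ℕ) : ℝ) ≠ 0 := by positivity
  have h2 : ((n.factorial : ℕ) : ℝ) ≠ 0 := by positivity
  push_cast
  field_simp

lemma coeff_zero_Bmap (f : ℝ[X]) : (Bmap f).coeff 0 = f.coeff 0 := by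
  simp [coeff_Bmap]

lemma lag_eq_Bmap {k : ℕ} (hk : 1 ≤ k) : lag k = Bmap (X * (X - 1) ^ (k - 1)) := by
  have hexp : (X - 1 : ℝ[X]) ^ (k-1)
      = ∑ i ∈ range k, C ((-1:ℝ) ^ (k-1-i) * (Nat.choose (k-1) i)) * X ^ i := by
    have : (X - 1 : ℝ[X]) = X + C (-1) := by rw [C_neg, C_1]; ring
    rw [this, Commute.add_pow (Commute.all _ _)]
    have hk1 : k - 1 + 1 = k := by omega
    rw [hk1]
    refine Finset.sum_congr rfl fun i _ => ?_
    simp only [← C_pow, map_mul, map_pow, map_neg, map_one, Polynomial.C_eq_natCast]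
    ring
  rw [hexp, Finset.mul_sum, Bmap_sum]
  have hterm : ∀ i ∈ range k, Bmap (X * (C ((-1:ℝ) ^ (k-1-i) * (Nat.choose (k-1) i)) * X ^ i))
      = C ((-1:ℝ) ^ (k-1-i) * (Nat.choose (k-1) i) / (i+1).factorial) * X ^ (i+1) := by
    intro i _
    have : (X * (C ((-1:ℝ) ^ (k-1-i) * (Nat.choose (k-1) i)) * X ^ i))
        = C ((-1:ℝ) ^ (k-1-i) * (Nat.choose (k-1) i)) * X ^ (i+1) := by ring
    rw [this]
    ext n
    rw [coeff_Bmap, coeff_C_mul, coeff_X_pow]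
    split <;> simp_all
  rw [Finset.sum_congr rfl hterm]
  rw [lag, if_neg (by omega)]
  have : Finset.Icc 1 k = Finset.Ico 1 (k+1) := by rw [Finset.Ico_add_one_right_eq_Icc]
  rw [this, Finset.sum_Ico_eq_sum_range]
  have hk1 : k + 1 - 1 = k := by omega
  rw [hk1]
  refine Finset.sum_congr rfl fun i _ => ?_
  have e1 : k - (1+i) = k - 1 - i := by omega
  have e2 : 1 + i - 1 = i := by omega
  rw [e1, e2, add_comm 1 i]

lemma lag_zero : lag 0 = 1 := if_pos rfl

lemma tele (p : ℕ) :
    ∑ v ∈ range p, ((-1:ℝ) ^ (p - 1 - v)) • ((X : ℝ[X]) * (X - 1) ^ v)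
      = (X - 1) ^ p - ((-1:ℝ) ^ p) • 1 := by
  induction p with
  | zero => simp
  | succ p ih =>
    rw [Finset.sum_range_succ]
    have hs : ∀ v ∈ range p, ((-1:ℝ) ^ (p + 1 - 1 - v)) • ((X : ℝ[X]) * (X - 1) ^ v)
        = -(((-1:ℝ) ^ (p - 1 - v)) • ((X : ℝ[X]) * (X - 1) ^ v)) := by
      intro v hv
      rw [Finset.mem_range] at hv
      have h2 : p + 1 - 1 - v = (p - 1 - v) + 1 := by omega
      rw [h2, pow_succ]
      simp [neg_smul]
    have h1 : p + 1 - 1 - p = 0 := by omega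
    rw [Finset.sum_congr rfl hs, Finset.sum_neg_distrib, ih, h1]
    simp only [Polynomial.smul_eq_C_mul, map_mul, map_pow, map_neg, map_one, pow_zero, pow_succ]
    ring

lemma Bmap_sub (f g : ℝ[X]) : Bmap (f - g) = Bmap f - Bmap g := by
  ext n; simp [coeff_Bmap, sub_div]

lemma lag_der {k : ℕ} (hk : 1 ≤ k) :
    derivative (lag k) = ∑ u ∈ range k, ((-1:ℝ) ^ (k - 1 - u)) • lag u := by
  obtain ⟨p, rfl⟩ : ∃ p, k = p + 1 := ⟨k - 1, by omega⟩
  rw [lag_eq_Bmap hk, derivative_Bmap_X_mul, Finset.sum_range_succ']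
  have hs : ∀ u ∈ range p, ((-1:ℝ) ^ (p + 1 - 1 - (u+1))) • lag (u+1)
      = Bmap (((-1:ℝ) ^ (p - 1 - u)) • ((X:ℝ[X]) * (X-1) ^ u)) := by
    intro u hu
    have h2 : p + 1 - 1 - (u+1) = p - 1 - u := by omega
    rw [h2, lag_eq_Bmap (by omega : 1 ≤ u + 1), Bmap_smul]
    norm_num
  have h3 : p + 1 - 1 - 0 = p := by omega
  have h5 : p + 1 - 1 = p := by omega
  rw [Finset.sum_congr rfl hs, ← Bmap_sum, tele, Bmap_sub, h3, h5, lag_zero, Bmap_smul, Bmap_one]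
  abel

lemma poly_ext_deriv {p q : ℝ[X]} (h1 : derivative p = derivative q)
    (h0 : p.coeff 0 = q.coeff 0) : p = q := by
  ext n
  cases n with
  | zero => exact h0
  | succ n =>
    have := congrArg (fun f => Polynomial.coeff f n) h1
    simp only [coeff_derivative] at this
    have hne : ((n:ℝ) + 1) ≠ 0 := by positivity
    exact mul_right_cancel₀ hne this

lemma lag_eval_zero {k : ℕ} (hk : 1 ≤ k) : (lag k).eval 0 = 0 := by
  rw [← coeff_zero_eq_eval_zero, lag_eq_Bmap hk, coeff_zero_Bmap, Polynomial.mul_coeff_zero]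
  simp

lemma polyDerivProd {ι : Type*} [DecidableEq ι] (s : Finset ι) (f : ι → ℝ[X]) :
    derivative (∏ i ∈ s, f i) = ∑ i ∈ s, (∏ j ∈ s.erase i, f j) * derivative (f i) := by
  induction s using Finset.induction_on with
  | empty => simp
  | @insert a s ha ih =>
    rw [Finset.prod_insert ha, derivative_mul, ih, Finset.sum_insert ha, Finset.erase_insert ha,
      Finset.mul_sum]
    congr 1
    · ring
    · refine Finset.sum_congr rfl fun i hi => ?_
      have hia : a ≠ i := fun h => ha (h ▸ hi)
      rw [Finset.erase_insert_of_ne hia, Finset.prod_insert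
        (fun h => ha (Finset.mem_of_mem_erase h))]
      ring

section Words

variable {α : Type*} [DecidableEq α]

def ee : List α → ℕ
  | [] => 0
  | x :: w => (if w.head? = some x then 1 else 0) + ee w

lemma ee_lt_length {w : List α} (hw : w ≠ []) : ee w < w.length := by
  induction w with
  | nil => exact absurd rfl hw
  | cons x w ih =>
    cases w with
    | nil => simp [ee]
    | cons y t =>
      have := ih (by simp)
      simp only [ee, List.length_cons] at *
      split <;> omega

noncomputable def wt (w : List α) : Polynomial ℝ :=
  X ^ (w.length - ee w) * (X - 1) ^ ee w

lemma wt_nil : wt ([] : List α) = 1 := by simp [wt, ee]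

lemma wt_cons (x : α) (w : List α) :
    wt (x :: w) = (if w.head? = some x then (X - 1 : ℝ[X]) else X) * wt w := by
  by_cases h : w.head? = some x
  · have hw : w ≠ [] := by cases w <;> simp_all
    have he := ee_lt_length hw
    have h1 : ee (x :: w) = 1 + ee w := by simp [ee, h]
    have h2 : (x :: w).length - ee (x :: w) = w.length - ee w := by
      simp only [h1, List.length_cons]; omega
    rw [wt, wt, h2, h1, if_pos h, pow_add, pow_one]
    ring
  · have he : ee w ≤ w.length := by
      cases w with
      | nil => simp [ee]
      | cons y t => exact le_of_lt (ee_lt_length (by simp))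
    have h1 : ee (x :: w) = ee w := by simp [ee, h]
    have h2 : (x :: w).length - ee (x :: w) = (w.length - ee w) + 1 := by
      simp only [h1, List.length_cons]; omega
    rw [wt, wt, h2, h1, if_neg h, pow_add, pow_one]
    ring

lemma wt_eval_zero {w : List α} (hw : w ≠ []) : (wt w).eval 0 = 0 := by
  have := ee_lt_length hw
  rw [wt, eval_mul, eval_pow, eval_X]
  rw [zero_pow (by omega)]
  ring

end Words

section WordsF

variable {m : ℕ}

lemma length_eq_sum_count (w : List (Fin m)) : w.length = ∑ i, w.count i := by
  induction w with
  | nil => simp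
  | cons x w ih =>
    simp only [List.count_cons, List.length_cons, ih, Finset.sum_add_distrib]
    have : ∑ i : Fin m, (if (x == i) = true then 1 else 0) = 1 := by
      simp only [beq_iff_eq, Finset.sum_ite_eq, Finset.mem_univ, if_pos]
    omega

def WordsF (c : Fin m → ℕ) : Finset (List (Fin m)) :=
  ((Finset.univ : Finset (Fin (∑ i, c i) → Fin m)).image (fun v => List.ofFn v)).filter
    (fun w => ∀ i, w.count i = c i)

lemma mem_WordsF {c : Fin m → ℕ} {w : List (Fin m)} :
    w ∈ WordsF c ↔ ∀ i, w.count i = c i := by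
  constructor
  · exact fun h => (Finset.mem_filter.1 h).2
  · intro h
    have hlen : w.length = ∑ i, c i := by
      rw [length_eq_sum_count]; exact Finset.sum_congr rfl fun i _ => h i
    refine Finset.mem_filter.2 ⟨Finset.mem_image.2
      ⟨fun j => w.get (Fin.cast hlen.symm j), Finset.mem_univ _, ?_⟩, h⟩
    apply List.ext_get (by simp [hlen])
    intro n h1 h2
    simp [List.get_ofFn]

noncomputable def Apoly (c : Fin m → ℕ) : ℝ[X] := ∑ w ∈ WordsF c, wt w

noncomputable def Epoly (x : Fin m) (c : Fin m → ℕ) : ℝ[X] :=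
  ∑ w ∈ (WordsF c).filter (fun w => w.head? = some x), wt w

lemma WordsF_zero {c : Fin m → ℕ} (hc : ∀ i, c i = 0) : WordsF c = {[]} := by
  ext w
  rw [mem_WordsF, Finset.mem_singleton]
  constructor
  · intro h
    cases w with
    | nil => rfl
    | cons x t =>
      exfalso
      have hx := h x
      rw [hc x] at hx
      simp [List.count_cons] at hx
  · rintro rfl; simpa using fun i => (hc i).symm

lemma Apoly_zero {c : Fin m → ℕ} (hc : ∀ i, c i = 0) : Apoly c = 1 := by
  rw [Apoly, WordsF_zero hc, Finset.sum_singleton, wt_nil]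

lemma WordsF_ne_nil {c : Fin m → ℕ} (hc : ¬ ∀ i, c i = 0) {w : List (Fin m)}
    (hw : w ∈ WordsF c) : w ≠ [] := by
  rintro rfl
  exact hc fun i => by simpa using (mem_WordsF.1 hw i).symm

lemma Epoly_zero {x : Fin m} {c : Fin m → ℕ} (hx : c x = 0) : Epoly x c = 0 := by
  rw [Epoly]
  refine Finset.sum_eq_zero fun w hw => ?_
  exfalso
  rw [Finset.mem_filter] at hw
  cases w with
  | nil => simp at hw
  | cons a t =>
    have ha : a = x := by simpa using hw.2
    have hcount := mem_WordsF.1 hw.1 x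
    rw [hx] at hcount
    subst ha
    simp [List.count_cons] at hcount

lemma Apoly_eq_sum_Epoly {c : Fin m → ℕ} (hc : ¬ ∀ i, c i = 0) :
    Apoly c = ∑ x : Fin m, Epoly x c := by
  rw [Apoly, ← Finset.sum_fiberwise_of_maps_to (g := fun w : List (Fin m) => w.head?)
    (t := Finset.univ) (fun w _ => Finset.mem_univ _) wt, Fintype.sum_option]
  have h0 : ∑ w ∈ (WordsF c).filter (fun w => w.head? = none), wt w = 0 := by
    refine Finset.sum_eq_zero fun w hw => ?_
    rw [Finset.mem_filter] at hw
    exact absurd (List.head?_eq_none_iff.mp hw.2) (WordsF_ne_nil hc hw.1)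
  rw [h0, zero_add]
  rfl

lemma Apoly_eval_zero {c : Fin m → ℕ} (hc : ¬ ∀ i, c i = 0) : (Apoly c).eval 0 = 0 := by
  rw [Apoly, eval_finset_sum]
  exact Finset.sum_eq_zero fun w hw => wt_eval_zero (WordsF_ne_nil hc hw)

lemma Epoly_rec {x : Fin m} {c : Fin m → ℕ} (hx : 1 ≤ c x) :
    Epoly x c = X * Apoly (Function.update c x (c x - 1))
      - Epoly x (Function.update c x (c x - 1)) := by
  set c' := Function.update c x (c x - 1) with hc'
  have himg : (WordsF c).filter (fun w => w.head? = some x)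
      = (WordsF c').image (fun w => x :: w) := by
    ext w
    rw [Finset.mem_filter, Finset.mem_image]
    constructor
    · rintro ⟨h1, h2⟩
      cases w with
      | nil => simp at h2
      | cons a t =>
        have ha : a = x := by simpa using h2
        refine ⟨t, mem_WordsF.2 fun i => ?_, by rw [ha]⟩
        have hct := mem_WordsF.1 h1 i
        rw [List.count_cons, ha] at hct
        rw [hc', Function.update_apply]
        by_cases hix : i = x
        · subst hix; simp at hct ⊢; omega
        · simp [beq_iff_eq, Ne.symm hix, hix] at hct ⊢; omega
    · rintro ⟨t, ht, rfl⟩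
      constructor
      · refine mem_WordsF.2 fun i => ?_
        have := mem_WordsF.1 ht i
        rw [hc', Function.update_apply] at this
        rw [List.count_cons]
        by_cases hix : i = x
        · subst hix; simp at this ⊢; omega
        · simp [beq_iff_eq, Ne.symm hix, hix] at this ⊢; omega
      · rfl
  rw [Epoly, himg, Finset.sum_image (by intro a _ b _ h; injection h)]
  have hterms : ∀ t ∈ WordsF c', wt (x :: t)
      = (if t.head? = some x then (X - 1 : ℝ[X]) else X) * wt t := fun t _ => wt_cons x t
  rw [Finset.sum_congr rfl hterms,
    ← Finset.sum_filter_add_sum_filter_not (WordsF c') (fun t => t.head? = some x)]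
  have e1 : ∑ t ∈ (WordsF c').filter (fun t => t.head? = some x),
      (if t.head? = some x then (X - 1 : ℝ[X]) else X) * wt t
      = (X - 1) * Epoly x c' := by
    rw [Epoly, Finset.mul_sum]
    refine Finset.sum_congr rfl fun t ht => ?_
    rw [if_pos (Finset.mem_filter.1 ht).2]
  have e2 : ∑ t ∈ (WordsF c').filter (fun t => ¬ t.head? = some x),
      (if t.head? = some x then (X - 1 : ℝ[X]) else X) * wt t
      = X * (Apoly c' - Epoly x c') := by
    have : Apoly c' - Epoly x c'
        = ∑ t ∈ (WordsF c').filter (fun t => ¬ t.head? = some x), wt t := by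
      rw [Apoly, Epoly, sub_eq_iff_eq_add']
      exact (Finset.sum_filter_add_sum_filter_not (WordsF c') (fun t => t.head? = some x) wt).symm
    rw [this, Finset.mul_sum]
    refine Finset.sum_congr rfl fun t ht => ?_
    rw [if_neg (Finset.mem_filter.1 ht).2]
  rw [e1, e2]
  ring

lemma Bmap_Epoly (x : Fin m) : ∀ (k : ℕ) (c : Fin m → ℕ), c x = k → 1 ≤ k →
    Bmap (Epoly x c) = ∑ s ∈ Finset.range k,
      ((-1:ℝ)^s) • Bmap (X * Apoly (Function.update c x (k - 1 - s))) := by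
  intro k
  induction k with
  | zero => omega
  | succ k ih =>
    intro c hck _
    have hrec := Epoly_rec (x := x) (c := c) (by omega)
    rw [hck] at hrec
    have hk1 : k + 1 - 1 = k := by omega
    rw [hk1] at hrec
    rw [hrec, Bmap_sub]
    by_cases hk : k = 0
    · subst hk
      rw [Epoly_zero (by rw [Function.update_self]), Bmap_zero, sub_zero,
        Finset.sum_range_one]
      norm_num
    · rw [ih (Function.update c x k) (Function.update_self x k c) (by omega)]
      rw [Finset.sum_range_succ']
      have hterm : ∀ s ∈ Finset.range k,
          ((-1:ℝ)^(s+1)) • Bmap (X * Apoly (Function.update c x (k + 1 - 1 - (s+1))))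
          = -(((-1:ℝ)^s) • Bmap (X * Apoly (Function.update (Function.update c x k) x (k - 1 - s)))) := by
        intro s _
        have e1 : k + 1 - 1 - (s+1) = k - 1 - s := by omega
        rw [e1, Function.update_idem, pow_succ]
        simp [neg_smul]
      rw [Finset.sum_congr rfl hterm, Finset.sum_neg_distrib]
      have e2 : k + 1 - 1 - 0 = k := by omega
      rw [e2, pow_zero, one_smul]
      ring

theorem Bmap_Apoly : ∀ (N : ℕ) (c : Fin m → ℕ), (∑ i, c i) = N →
    Bmap (Apoly c) = ∏ i, lag (c i) := by
  intro N
  induction N using Nat.strong_induction_on with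
  | _ N ih =>
    intro c hN
    by_cases hc : ∀ i, c i = 0
    · rw [Apoly_zero hc, Bmap_one,
        Finset.prod_congr rfl (fun i _ => by rw [hc i, lag_zero]), Finset.prod_const_one]
    · obtain ⟨x0, hx0⟩ := not_forall.1 hc
      symm
      apply poly_ext_deriv
      · -- derivative side
        rw [polyDerivProd, Apoly_eq_sum_Epoly hc, Bmap_sum, derivative_sum]
        refine Finset.sum_congr rfl fun x _ => ?_
        by_cases hx : c x = 0
        · rw [Epoly_zero hx, Bmap_zero, map_zero, hx, lag_zero, derivative_one, mul_zero]
        · rw [Bmap_Epoly x (c x) c rfl (by omega), derivative_sum]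
          have hterm : ∀ s ∈ Finset.range (c x),
              derivative (((-1:ℝ)^s) • Bmap (X * Apoly (Function.update c x (c x - 1 - s))))
              = ((-1:ℝ)^s) • (lag (c x - 1 - s) * ∏ i ∈ Finset.univ \ {x}, lag (c i)) := by
            intro s hs
            rw [Finset.mem_range] at hs
            have hcxN : c x ≤ N := hN ▸ Finset.single_le_sum
              (f := c) (fun i _ => Nat.zero_le _) (Finset.mem_univ x)
            rw [derivative_smul, derivative_Bmap_X_mul]
            have hupd : ∑ i, Function.update c x (c x - 1 - s) i = N - (s + 1) := by
              rw [Finset.sum_update_of_mem (Finset.mem_univ x)]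
              have : ∑ i ∈ Finset.univ \ {x}, c i = N - c x := by
                have := Finset.sum_update_of_mem (Finset.mem_univ x) c (c x)
                rw [Function.update_eq_self] at this
                omega
              omega
            rw [ih (N - (s + 1)) (by omega) _ hupd]
            rw [Finset.prod_congr rfl fun i _ => (Function.apply_update (fun _ j => lag j) c x (c x - 1 - s) i),
              Finset.prod_update_of_mem (Finset.mem_univ x)]
          rw [Finset.sum_congr rfl hterm]
          -- now the lag side
          rw [lag_der (by omega : 1 ≤ c x)]
          rw [← Finset.sum_range_reflect]
          rw [Finset.mul_sum]
          refine Finset.sum_congr rfl fun s hs => ?_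
          rw [Finset.mem_range] at hs
          have e1 : c x - 1 - (c x - 1 - s) = s := by omega
          rw [e1, Finset.erase_eq]
          rw [mul_smul_comm]
          ring
      · -- constant coefficient side
        rw [coeff_zero_Bmap, coeff_zero_eq_eval_zero, coeff_zero_eq_eval_zero,
          Apoly_eval_zero hc, eval_prod]
        exact Finset.prod_eq_zero (Finset.mem_univ x0) (lag_eval_zero (by omega))

end WordsF

section Facts

variable {α : Type*} [DecidableEq α]

def consHead (x : α) : List (List α) → List (List α)
  | [] => []
  | p :: ψ => (x :: p) :: ψ

def facts : List α → List (List (List α))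
  | [] => [[]]
  | x :: w => ((facts w).map (fun φ => [x] :: φ))
      ++ (((facts w).filter (fun φ => !φ.isEmpty && !(φ.headI.head? == some x))).map (consHead x))

def partsOK (φ : List (List α)) : Prop := ∀ p ∈ φ, p ≠ [] ∧ List.Chain' (· ≠ ·) p

lemma mem_facts : ∀ (w : List α) (φ : List (List α)),
    φ ∈ facts w ↔ (φ.flatten = w ∧ partsOK φ) := by
  intro w
  induction w with
  | nil =>
    intro φ
    simp only [facts, List.mem_singleton]
    constructor
    · rintro rfl; exact ⟨rfl, fun p hp => absurd hp List.not_mem_nil⟩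
    · rintro ⟨h1, h2⟩
      cases φ with
      | nil => rfl
      | cons p ψ =>
        exfalso
        have hp : p ≠ [] := (h2 p (by simp)).1
        simp only [List.flatten_cons] at h1
        rcases List.append_eq_nil_iff.mp h1 with ⟨h3, -⟩
        exact hp h3
  | cons x w ih =>
    intro φ
    simp only [facts, List.mem_append, List.mem_map, List.mem_filter]
    constructor
    · rintro (⟨φ', hφ', rfl⟩ | ⟨φ', ⟨hφ', hcond⟩, rfl⟩)
      · obtain ⟨hfl, hok⟩ := (ih φ').1 hφ'
        refine ⟨by simp [hfl], fun p hp => ?_⟩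
        rcases List.mem_cons.mp hp with rfl | hp'
        · exact ⟨by simp, List.isChain_singleton _⟩
        · exact hok p hp'
      · obtain ⟨hfl, hok⟩ := (ih φ').1 hφ'
        cases φ' with
        | nil => simp [List.isEmpty] at hcond
        | cons p ψ =>
          have hhead : p.head? ≠ some x := by
            simp only [List.headI, Bool.and_eq_true, Bool.not_eq_true',
              beq_eq_false_iff_ne, ne_eq, List.isEmpty_cons] at hcond
            exact hcond.2
          constructor
          · simp only [consHead, List.flatten_cons, List.cons_append] at hfl ⊢
            rw [hfl]
          · intro q hq
            simp only [consHead, List.mem_cons] at hq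
            rcases hq with rfl | hq'
            · have hpne : p ≠ [] := (hok p (by simp)).1
              have hchain : List.Chain' (· ≠ ·) p := (hok p (by simp)).2
              cases p with
              | nil => exact absurd rfl hpne
              | cons b t =>
                refine ⟨by simp, ?_⟩
                apply List.isChain_cons_cons.mpr
                refine ⟨fun hxb => ?_, hchain⟩
                subst hxb
                exact hhead rfl
            · exact hok q (List.mem_cons_of_mem _ hq')
    · rintro ⟨hfl, hok⟩
      cases φ with
      | nil => simp at hfl
      | cons p ψ =>
        have hpne : p ≠ [] := (hok p (by simp)).1
        cases p with
        | nil => exact absurd rfl hpne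
        | cons a t =>
          simp only [List.flatten_cons, List.cons_append, List.cons.injEq] at hfl
          obtain ⟨rfl, hw⟩ := hfl
          cases t with
          | nil =>
            left
            refine ⟨ψ, (ih ψ).2 ⟨by simpa using hw, fun q hq => hok q (List.mem_cons_of_mem _ hq)⟩, rfl⟩
          | cons b t' =>
            right
            have hchain : List.Chain' (· ≠ ·) (a :: b :: t') := (hok _ (by simp)).2
            have hab : a ≠ b := (List.isChain_cons_cons.mp hchain).1
            refine ⟨(b :: t') :: ψ, ⟨(ih _).2 ⟨by simpa using hw, ?_⟩, ?_⟩, rfl⟩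
            · intro q hq
              rcases List.mem_cons.mp hq with rfl | hq'
              · exact ⟨by simp, (List.isChain_cons_cons.mp hchain).2⟩
              · exact hok q (List.mem_cons_of_mem _ hq')
            · simp only [List.headI, Bool.and_eq_true, Bool.not_eq_true',
                beq_eq_false_iff_ne, ne_eq, List.isEmpty_cons]
              refine ⟨by simp, ?_⟩
              simp only [List.head?_cons, Option.some.injEq]
              exact fun h => hab h.symm

lemma facts_nodup : ∀ (w : List α), (facts w).Nodup := by
  intro w
  induction w with
  | nil => simp [facts]
  | cons x w ih =>
    rw [facts]
    refine List.Nodup.append ?_ ?_ ?_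
    · exact ih.map fun a b h => by injection h
    · refine List.Nodup.map_on ?_ (ih.filter _)
      intro a ha b hb hab
      have ha' : a ≠ [] := by
        rcases List.mem_filter.mp ha with ⟨-, hc⟩
        intro h; subst h; simp at hc
      have hb' : b ≠ [] := by
        rcases List.mem_filter.mp hb with ⟨-, hc⟩
        intro h; subst h; simp at hc
      cases a with
      | nil => exact absurd rfl ha'
      | cons p ψ =>
        cases b with
        | nil => exact absurd rfl hb'
        | cons q χ =>
          simp only [consHead, List.cons.injEq] at hab
          obtain ⟨⟨-, h3⟩, h2⟩ := hab
          simp [h3, h2]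
    · intro a ha hb
      rcases List.mem_map.mp ha with ⟨φ₁, -, rfl⟩
      rcases List.mem_map.mp hb with ⟨φ₂, hφ₂, he⟩
      have h2' : φ₂ ≠ [] := by
        rcases List.mem_filter.mp hφ₂ with ⟨-, hc⟩
        intro h; subst h; simp at hc
      cases φ₂ with
      | nil => exact absurd rfl h2'
      | cons p ψ =>
        simp only [consHead, List.cons.injEq] at he
        obtain ⟨⟨-, h3⟩, -⟩ := he
        have hp : p ≠ [] :=
          (((mem_facts w _).1 (List.mem_filter.mp hφ₂).1).2 p (by simp)).1
        exact hp h3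

lemma facts_ne_nil {w : List α} (hw : w ≠ []) {φ : List (List α)} (hφ : φ ∈ facts w) :
    φ ≠ [] := by
  rintro rfl
  exact hw ((mem_facts w []).1 hφ).1.symm

lemma facts_length_le {w : List α} {φ : List (List α)} (hφ : φ ∈ facts w) :
    φ.length ≤ w.length := by
  obtain ⟨hfl, hok⟩ := (mem_facts w φ).1 hφ
  subst hfl
  clear hφ
  induction φ with
  | nil => simp
  | cons p ψ ih =>
    have hp : p ≠ [] := (hok p (by simp)).1
    have : 1 ≤ p.length := by
      cases p with
      | nil => exact absurd rfl hp
      | cons a t => simp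
    have := ih (fun q hq => hok q (List.mem_cons_of_mem _ hq))
    simp only [List.flatten_cons, List.length_append, List.length_cons]
    omega

lemma facts_sum_wt : ∀ (w : List α), w ≠ [] →
    ((facts w).map (fun φ => (X:ℝ[X]) * (X - 1)^(φ.length - 1))).sum = wt w := by
  intro w
  induction w with
  | nil => intro h; exact absurd rfl h
  | cons x w ih =>
    intro _
    rw [facts, List.map_append, List.sum_append, List.map_map, List.map_map]
    by_cases hw : w = []
    · subst hw
      simp [facts, consHead, wt, ee]
    · -- first summand
      have h1 : ((facts w).map ((fun φ => (X:ℝ[X]) * (X - 1)^(φ.length - 1)) ∘ (fun φ => [x] :: φ))).sum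
          = (X - 1) * wt w := by
        rw [← ih hw, ← List.sum_map_mul_left]
        congr 1
        refine List.map_congr_left fun φ hφ => ?_
        have hne : φ ≠ [] := facts_ne_nil hw hφ
        have hlen : 1 ≤ φ.length := List.length_pos_iff.mpr hne
        simp only [Function.comp_apply, List.length_cons]
        have e1 : φ.length + 1 - 1 = (φ.length - 1) + 1 := by omega
        rw [e1, pow_succ]
        ring
      -- the filter is all-or-nothing
      have hallhead : ∀ φ ∈ facts w, (!φ.isEmpty && !(φ.headI.head? == some x)) =
          (decide ¬(w.head? = some x)) := by
        intro φ hφ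
        obtain ⟨hfl, hok⟩ := (mem_facts w φ).1 hφ
        have hne : φ ≠ [] := facts_ne_nil hw hφ
        cases φ with
        | nil => exact absurd rfl hne
        | cons p ψ =>
          have hp : p ≠ [] := (hok p (by simp)).1
          cases p with
          | nil => exact absurd rfl hp
          | cons a t =>
            have hhead : w.head? = some a := by
              rw [← hfl]; simp
            rw [hhead]
            by_cases hax : a = x
            · subst hax; simp [List.headI]
            · simp [List.headI, hax, Ne.symm]

      by_cases hx : w.head? = some x
      · have hfilter : (facts w).filter (fun φ => !φ.isEmpty && !(φ.headI.head? == some x)) = [] := by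
          rw [List.filter_eq_nil_iff]
          intro φ hφ
          rw [hallhead φ hφ]
          simp [hx]
        rw [hfilter]
        simp only [List.map_nil, List.sum_nil, add_zero, h1]
        rw [wt_cons, if_pos hx]
      · have hfilter : (facts w).filter (fun φ => !φ.isEmpty && !(φ.headI.head? == some x)) = facts w := by
          rw [List.filter_eq_self]
          intro φ hφ
          rw [hallhead φ hφ]
          simp [hx]
        rw [hfilter]
        have h2 : ((facts w).map ((fun φ => (X:ℝ[X]) * (X - 1)^(φ.length - 1)) ∘ consHead x)).sum
            = wt w := by
          rw [← ih hw]
          refine congrArg _ (List.map_congr_left fun φ hφ => ?_)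
          have hne : φ ≠ [] := facts_ne_nil hw hφ
          cases φ with
          | nil => exact absurd rfl hne
          | cons p ψ => simp [consHead, Function.comp_apply]
        rw [h1, h2, wt_cons, if_neg hx]
        ring

end Facts

lemma Bmap_list_sum (l : List (Polynomial ℝ)) : Bmap l.sum = (l.map Bmap).sum := by
  induction l with
  | nil => simp [Bmap_zero]
  | cons a l ih => rw [List.sum_cons, Bmap_add, ih, List.map_cons, List.sum_cons]


/-- For an alphabet of `m` distinct letters and prescribed multiplicities `r i`:
`∏_{i} l_{r i}(t) = Σ_k n_k l_k(t)`, where `n_k` is the number of factorizations on the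
alphabet with `k` parts, each part a nonempty Carlitz word, in which letter `i` is used
exactly `r i` times.  The sum is finite: `n_k = 0` for `k > Σ_i r i`. -/
theorem stmt3 (m : ℕ) (hm : 1 ≤ m) (r : Fin m → ℕ)
    (n : ℕ → ℕ)
    (hn : ∀ k, n k = Nat.card {φ : List (List (Fin m)) //
      φ.length = k ∧ (∀ p ∈ φ, p ≠ [] ∧ List.Chain' (· ≠ ·) p) ∧
      ∀ i, φ.flatten.count i = r i}) :
    ∏ i, lag (r i) = ∑ k ∈ Finset.range (∑ i, r i + 1), (n k : ℝ) • lag k := by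
  classical
  by_cases hr : ∀ i, r i = 0
  · have hsum : ∑ i, r i = 0 := Finset.sum_eq_zero fun i _ => hr i
    rw [hsum, Finset.sum_range_one]
    have hn0 : n 0 = 1 := by
      rw [hn 0]
      haveI : Unique {φ : List (List (Fin m)) //
          φ.length = 0 ∧ (∀ p ∈ φ, p ≠ [] ∧ List.Chain' (· ≠ ·) p) ∧
          ∀ i, φ.flatten.count i = r i} := by
        refine ⟨⟨⟨[], rfl, by simp, fun i => by simp [hr i]⟩⟩, ?_⟩
        rintro ⟨φ, h, -, -⟩
        exact Subtype.ext (List.length_eq_zero_iff.mp h)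
      exact Nat.card_unique
    rw [hn0, Finset.prod_congr rfl (fun i _ => by rw [hr i, lag_zero]), Finset.prod_const_one]
    rw [lag_zero]
    norm_num
  · set F : Finset (List (List (Fin m))) :=
      (WordsF r).biUnion (fun w => (facts w).toFinset) with hF
    have memF : ∀ φ, φ ∈ F ↔ (partsOK φ ∧ ∀ i, φ.flatten.count i = r i) := by
      intro φ
      rw [hF, Finset.mem_biUnion]
      constructor
      · rintro ⟨w, hw, hφ⟩
        rw [List.mem_toFinset] at hφ
        obtain ⟨hfl, hok⟩ := (mem_facts w φ).1 hφ
        exact ⟨hok, fun i => by rw [hfl]; exact mem_WordsF.1 hw i⟩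
      · rintro ⟨hok, hcount⟩
        exact ⟨φ.flatten, mem_WordsF.2 hcount,
          List.mem_toFinset.2 ((mem_facts _ φ).2 ⟨rfl, hok⟩)⟩
    have hnk : ∀ k, n k = (F.filter (fun φ => φ.length = k)).card := by
      intro k
      rw [hn k, ← Nat.card_eq_finsetCard]
      refine Nat.card_congr (Equiv.subtypeEquivRight fun φ => ?_)
      rw [Finset.mem_filter, memF]
      tauto
    have hlen : ∀ φ ∈ F, φ.length ∈ Finset.range (∑ i, r i + 1) := by
      intro φ hφ
      rw [hF, Finset.mem_biUnion] at hφ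
      obtain ⟨w, hw, hφ⟩ := hφ
      rw [List.mem_toFinset] at hφ
      have h1 := facts_length_le hφ
      have h2 : w.length = ∑ i, r i := by
        rw [length_eq_sum_count]
        exact Finset.sum_congr rfl fun i _ => mem_WordsF.1 hw i
      rw [Finset.mem_range]
      omega
    have step1 : ∑ k ∈ Finset.range (∑ i, r i + 1), (n k : ℝ) • lag k
        = ∑ φ ∈ F, lag φ.length := by
      rw [← Finset.sum_fiberwise_of_maps_to hlen (fun φ => lag φ.length)]
      refine Finset.sum_congr rfl fun k _ => ?_
      rw [hnk k]
      rw [Finset.sum_congr rfl (fun φ hφ => by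
        rw [(Finset.mem_filter.1 hφ).2] : ∀ φ ∈ F.filter (fun φ => φ.length = k),
          lag φ.length = lag k)]
      rw [Finset.sum_const, Nat.cast_smul_eq_nsmul]
    have hdisj : (↑(WordsF r) : Set (List (Fin m))).PairwiseDisjoint
        (fun w => (facts w).toFinset) := by
      intro w₁ _ w₂ _ hne
      refine Finset.disjoint_left.2 fun φ h1 h2 => ?_
      rw [List.mem_toFinset] at h1 h2
      exact hne (((mem_facts w₁ φ).1 h1).1 ▸ ((mem_facts w₂ φ).1 h2).1)
    have step2 : ∑ φ ∈ F, lag φ.length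
        = ∑ w ∈ WordsF r, ∑ φ ∈ (facts w).toFinset, lag φ.length := by
      rw [hF, Finset.sum_biUnion hdisj]
    have step3 : ∀ w ∈ WordsF r, ∑ φ ∈ (facts w).toFinset, lag φ.length = Bmap (wt w) := by
      intro w hw
      have hwne : w ≠ [] := WordsF_ne_nil hr hw
      rw [List.sum_toFinset _ (facts_nodup w)]
      have hmc : (facts w).map (fun φ => lag φ.length)
          = (facts w).map (Bmap ∘ (fun φ => (X:ℝ[X]) * (X - 1)^(φ.length - 1))) :=
        List.map_congr_left fun φ hφ => by
          rw [Function.comp_apply,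
            ← lag_eq_Bmap (List.length_pos_iff.mpr (facts_ne_nil hwne hφ))]
      rw [hmc, ← List.map_map, ← Bmap_list_sum, facts_sum_wt w hwne]
    rw [step1, step2, Finset.sum_congr rfl step3, ← Bmap_sum, ← Apoly]
    exact (Bmap_Apoly (∑ i, r i) r rfl).symm
end

section
/- For all integers i, j ≥ 1, the polynomial l_i(t)·l_j(t) ∈ ℝ[t] has zero constant term, and i · Φ( (l_i(t)·l_j(t))/t ) = 1 if i = j and 0 otherwise. -/
/-- The linear functional `Φ` with `Φ(t^n) = n!`. -/
noncomputable def Phi (p : Polynomial ℝ) : ℝ :=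
  ∑ n ∈ p.support, p.coeff n * (Nat.factorial n)

open Finset Polynomial

lemma Phi_eq_sum (p : Polynomial ℝ) : Phi p = p.sum (fun n a => a * n.factorial) := rfl

lemma Phi_add (p q : Polynomial ℝ) : Phi (p + q) = Phi p + Phi q := by
  simp only [Phi_eq_sum]
  exact Polynomial.sum_add_index p q _ (by simp) (by intros; ring)

lemma Phi_zero : Phi 0 = 0 := by simp [Phi]

lemma Phi_finsum {α : Type*} (s : Finset α) (f : α → Polynomial ℝ) :
    Phi (∑ x ∈ s, f x) = ∑ x ∈ s, Phi (f x) := by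
  induction s using Finset.cons_induction with
  | empty => simp [Phi_zero]
  | cons a s ha ih => rw [Finset.sum_cons, Phi_add, ih, Finset.sum_cons]

lemma Phi_C_mul_X_pow (c : ℝ) (n : ℕ) : Phi (C c * X ^ n) = c * n.factorial := by
  rw [C_mul_X_pow_eq_monomial, Phi_eq_sum, Polynomial.sum_monomial_index]
  simp

lemma divX_finsum {α : Type*} (s : Finset α) (f : α → Polynomial ℝ) :
    (∑ x ∈ s, f x).divX = ∑ x ∈ s, (f x).divX := by
  induction s using Finset.cons_induction with
  | empty => simp
  | cons a s ha ih => rw [Finset.sum_cons, divX_add, ih, Finset.sum_cons]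

lemma lag_eq (k : ℕ) (hk : 1 ≤ k) : lag k = ∑ a ∈ Finset.range k,
    C ((-1 : ℝ) ^ (k - 1 - a) * (Nat.choose (k - 1) a) / (Nat.factorial (a+1))) * X ^ (a+1) := by
  rw [lag, if_neg (by omega)]
  rw [← Finset.Ico_add_one_right_eq_Icc, Finset.sum_Ico_eq_sum_range]
  refine Finset.sum_congr (by norm_num) fun a ha => ?_
  have h2 : k - (1+a) = k - 1 - a := by omega
  have h3 : 1 + a - 1 = a := by omega
  have h1 : 1 + a = a + 1 := by omega
  rw [h2, h3, h1]

lemma lag_coeff_zero (k : ℕ) (hk : 1 ≤ k) : (lag k).coeff 0 = 0 := by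
  rw [lag_eq k hk]
  rw [Polynomial.finset_sum_coeff]
  refine Finset.sum_eq_zero fun a ha => ?_
  rw [Polynomial.coeff_C_mul, Polynomial.coeff_X_pow]
  simp

lemma key_sum (ci cj : ℕ → ℝ) (i j : ℕ) (hi : 1 ≤ i) (hj : 1 ≤ j) :
    Phi (((∑ a ∈ Finset.range i, C (ci a) * X ^ (a+1)) *
      (∑ b ∈ Finset.range j, C (cj b) * X ^ (b+1))).divX)
    = ∑ a ∈ Finset.range i, ∑ b ∈ Finset.range j, ci a * cj b * (a+b+1).factorial := by
  rw [Finset.sum_mul_sum]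
  rw [divX_finsum, Phi_finsum]
  refine Finset.sum_congr rfl fun a ha => ?_
  rw [divX_finsum, Phi_finsum]
  refine Finset.sum_congr rfl fun b hb => ?_
  have : (C (ci a) * X ^ (a+1)) * (C (cj b) * X ^ (b+1))
      = C (ci a * cj b) * X ^ (a+b+2) := by
    rw [C_mul]; ring
  rw [this, Polynomial.divX_C_mul_X_pow]
  rw [if_neg (by omega)]
  have : a + b + 2 - 1 = a + b + 1 := by omega
  rw [this, Phi_C_mul_X_pow]


lemma alt_step (h : ℕ → ℝ) (n : ℕ) :
    ∑ q ∈ range (n+2), (-1:ℝ)^q * ((n+1).choose q) * h q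
    = ∑ q ∈ range (n+1), (-1:ℝ)^q * (n.choose q) * (h q - h (q+1)) := by
  have key : ∑ q ∈ range (n+2), (-1:ℝ)^q * ((n+1).choose q) * h q
      = ∑ q ∈ range (n+2), ((-1:ℝ)^q * (n.choose q) * h q
        + (-1:ℝ)^q * (n.choose (q-1)) * h q * (if q = 0 then 0 else 1)) := by
    refine Finset.sum_congr rfl fun q hq => ?_
    rcases q with _ | q
    · simp
    · simp only [Nat.choose_succ_succ, if_neg (Nat.succ_ne_zero q), Nat.succ_sub_one]
      push_cast
      ring
  have h1 : ∑ q ∈ range (n+2), (-1:ℝ)^q * (n.choose q) * h q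
      = ∑ q ∈ range (n+1), (-1:ℝ)^q * (n.choose q) * h q := by
    rw [Finset.sum_range_succ, Nat.choose_succ_self]; simp
  have h2 : (∑ q ∈ range (n+2), (-1:ℝ)^q * (n.choose (q-1)) * h q * (if q = 0 then 0 else 1))
      = ∑ q ∈ range (n+1), -((-1:ℝ)^q * (n.choose q) * h (q+1)) := by
    rw [Finset.sum_range_succ']
    simp only [Nat.succ_sub_one, if_neg (Nat.succ_ne_zero _), ite_true, if_true, mul_zero,
      add_zero, mul_one]
    exact Finset.sum_congr rfl fun q hq => by ring
  rw [key, Finset.sum_add_distrib, h1, h2, ← Finset.sum_add_distrib]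
  exact Finset.sum_congr rfl fun q hq => by ring

noncomputable def U (p n s : ℕ) : ℝ :=
  ∑ q ∈ range (n+1), (-1:ℝ)^q * (n.choose q) * ((p+q+s).factorial / (q+s).factorial)

lemma U_rec (p n s : ℕ) : U p (n+1) s = -(p:ℝ) * U (p-1) n (s+1) := by
  have hd : ∀ q : ℕ, ((p+q+s).factorial : ℝ) / (q+s).factorial
      - ((p+(q+1)+s).factorial : ℝ) / ((q+1)+s).factorial
      = -(p:ℝ) * (((p-1)+q+(s+1)).factorial / (q+(s+1)).factorial) := by
    intro q
    rcases p with _ | r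
    · simp only [Nat.zero_add, Nat.cast_zero, neg_zero, zero_mul]
      rw [div_self (by positivity), div_self (by positivity), sub_self]
    · have h1 : r + 1 + (q+1) + s = (r + 1 + q + s) + 1 := by ring
      have h2 : (q+1) + s = (q + s) + 1 := by ring
      have h3 : r + 1 - 1 + q + (s+1) = r + 1 + q + s := by omega
      have h4 : q + (s+1) = (q+s)+1 := by ring
      rw [h1, h2, h3, h4, Nat.factorial_succ, Nat.factorial_succ]
      have hf : ((q+s).factorial : ℝ) ≠ 0 := by positivity
      have hf2 : (((q+s)+1) : ℝ) ≠ 0 := by positivity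
      field_simp
      push_cast
      ring
  unfold U
  rw [alt_step]
  rw [Finset.mul_sum]
  refine Finset.sum_congr rfl fun q hq => ?_
  rw [hd q]
  ring

lemma U_closed (p n s : ℕ) :
    U p n s = (-1:ℝ)^n * (n.factorial * (p.choose n)) * ((p+s).factorial / (s+n).factorial) := by
  induction n generalizing p s with
  | zero => simp [U]
  | succ n ih =>
    rw [U_rec, ih]
    rcases p with _ | r
    · simp
    · have h3 : r + 1 - 1 = r := rfl
      have h4 : r + (s+1) = r + 1 + s := by ring
      have h5 : s + 1 + n = s + (n+1) := by ring
      rw [h3, h4, h5]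
      have key : ((r+1) : ℝ) * (r.choose n) = ((n+1) : ℝ) * ((r+1).choose (n+1)) := by
        have := Nat.add_one_mul_choose_eq r n
        have : (r+1) * r.choose n = (r+1).choose (n+1) * (n+1) := by
          simpa [Nat.succ_eq_add_one] using this
        exact_mod_cast by rw [this]; ring
      push_cast [Nat.factorial_succ]
      push_cast at key
      linear_combination (-(-1:ℝ)^n * (n.factorial:ℝ) *
        (((r+1+s).factorial:ℝ) / (((s+(n+1)).factorial:ℝ)))) * key


lemma npow_sub (n q : ℕ) (h : q ≤ n) : (-1:ℝ)^(n-q) = (-1)^n * (-1)^q := by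
  conv_rhs => rw [← Nat.sub_add_cancel h]
  rw [pow_add, mul_assoc, ← pow_add, ← two_mul, pow_mul]
  norm_num

lemma alt_choose_real (d : ℕ) :
    ∑ r ∈ range (d+1), (-1:ℝ)^r * (d.choose r) = if d = 0 then 1 else 0 := by
  have h := Int.alternating_sum_range_choose (n := d)
  have h2 : ((∑ r ∈ range (d+1), (-1:ℤ)^r * (d.choose r) : ℤ) : ℝ)
      = ((if d = 0 then 1 else 0 : ℤ) : ℝ) := by rw [h]
  rw [show ((if d = 0 then 1 else 0 : ℤ) : ℝ) = (if d = 0 then (1:ℝ) else 0) by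
    split <;> simp] at h2
  push_cast at h2
  exact h2

lemma choose_alt (m n : ℕ) :
    ∑ p ∈ range (m+1), (-1:ℝ)^(m-p) * (m.choose p) * (p.choose n)
    = if m = n then 1 else 0 := by
  rcases le_or_gt n m with hn | hn
  · have hsub : ∑ p ∈ range (m+1), (-1:ℝ)^(m-p) * (m.choose p) * (p.choose n)
        = ∑ p ∈ Ico n (m+1), (-1:ℝ)^(m-p) * (m.choose p) * (p.choose n) := by
      rw [Finset.range_eq_Ico, ← Finset.sum_Ico_consecutive _ (Nat.zero_le n) (by omega)]
      have : ∑ p ∈ Ico 0 n, (-1:ℝ)^(m-p) * (m.choose p) * (p.choose n) = 0 := by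
        refine Finset.sum_eq_zero fun p hp => ?_
        rw [Nat.choose_eq_zero_of_lt (Finset.mem_Ico.mp hp).2]
        simp
      rw [this, zero_add]
    rw [hsub, Finset.sum_Ico_eq_sum_range]
    have hdom : m + 1 - n = (m - n) + 1 := by omega
    rw [hdom]
    have : ∀ r ∈ range ((m-n)+1), (-1:ℝ)^(m-(n+r)) * (m.choose (n+r)) * ((n+r).choose n)
        = ((m.choose n : ℝ) * (-1)^(m-n)) * ((-1)^r * ((m-n).choose r)) := by
      intro r hr
      have hr' : r ≤ m - n := by simpa using Nat.lt_succ_iff.mp (Finset.mem_range.mp hr)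
      have h1 : m - (n+r) = (m-n) - r := by omega
      have h2 : (m.choose (n+r)) * ((n+r).choose n) = m.choose n * (m-n).choose r := by
        have := Nat.choose_mul (n := m) (k := n+r) (s := n) (by omega)
        simpa [Nat.add_sub_cancel_left] using this
      rw [h1, npow_sub _ _ (by omega)]
      have h2' : ((m.choose (n+r)) : ℝ) * ((n+r).choose n) = (m.choose n : ℝ) * ((m-n).choose r) := by
        exact_mod_cast h2
      linear_combination ((-1:ℝ)^(m-n) * (-1)^r) * h2'
    rw [Finset.sum_congr rfl this, ← Finset.mul_sum, alt_choose_real]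
    rcases eq_or_lt_of_le hn with h | h
    · simp [h, Nat.sub_self]
    · rw [if_neg (by omega), if_neg (by omega), mul_zero]
  · rw [if_neg (by omega)]
    refine Finset.sum_eq_zero fun p hp => ?_
    rw [Nat.choose_eq_zero_of_lt (show p < n by simp at hp; omega)]
    simp


/-- For `i, j ≥ 1`, the polynomial `l_i(t)·l_j(t)` has zero constant term and
`i · Φ((l_i·l_j)/t) = δ_{ij}`; division by `t` is `Polynomial.divX`, exact here since
the constant term vanishes. -/
theorem stmt15 (i j : ℕ) (hi : 1 ≤ i) (hj : 1 ≤ j) :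
    (lag i * lag j).coeff 0 = 0 ∧
    (i : ℝ) * Phi ((lag i * lag j).divX) = if i = j then 1 else 0 := by
  obtain ⟨m, rfl⟩ : ∃ m, i = m + 1 := ⟨i - 1, by omega⟩
  obtain ⟨n, rfl⟩ : ∃ n, j = n + 1 := ⟨j - 1, by omega⟩
  constructor
  · rw [Polynomial.mul_coeff_zero, lag_coeff_zero _ (by omega), zero_mul]
  · have hP : Phi ((lag (m+1) * lag (n+1)).divX)
        = ∑ p ∈ range (m+1), ∑ q ∈ range (n+1),
          ((-1:ℝ)^(m-p) * (m.choose p) / (p+1).factorial) *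
          ((-1:ℝ)^(n-q) * (n.choose q) / (q+1).factorial) * ((p+q+1).factorial) := by
      rw [lag_eq (m+1) (by omega), lag_eq (n+1) (by omega)]
      simp only [Nat.add_sub_cancel]
      exact key_sum _ _ _ _ (by omega) (by omega)
    have hsq : (-1:ℝ)^n * (-1)^n = 1 := by
      rw [← pow_add, ← two_mul, pow_mul]; norm_num
    have hstep : ∀ p ∈ range (m+1), (∑ q ∈ range (n+1),
        ((-1:ℝ)^(m-p) * (m.choose p) / (p+1).factorial) *
        ((-1:ℝ)^(n-q) * (n.choose q) / (q+1).factorial) * ((p+q+1).factorial))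
        = ((-1:ℝ)^(m-p) * (m.choose p) * (p.choose n)) * (1/((n:ℝ)+1)) := by
      intro p hp
      have h1 : ∑ q ∈ range (n+1),
          ((-1:ℝ)^(m-p) * (m.choose p) / (p+1).factorial) *
          ((-1:ℝ)^(n-q) * (n.choose q) / (q+1).factorial) * ((p+q+1).factorial)
          = ((-1:ℝ)^(m-p) * (m.choose p) / (p+1).factorial) * ((-1:ℝ)^n * U p n 1) := by
        rw [U, Finset.mul_sum, Finset.mul_sum]
        refine Finset.sum_congr rfl fun q hq => ?_
        have hq' : q ≤ n := by simp at hq; omega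
        rw [npow_sub n q hq']
        ring
      rw [h1, U_closed]
      have h2 : ((1+n).factorial : ℝ) = ((n:ℝ)+1) * (n.factorial : ℝ) := by
        rw [show 1+n = n+1 by ring, Nat.factorial_succ]; push_cast; ring
      have hfp : ((p+1).factorial : ℝ) ≠ 0 := by positivity
      have hfn : ((n.factorial : ℕ) : ℝ) ≠ 0 := by positivity
      have hn1 : ((n:ℝ)+1) ≠ 0 := by positivity
      rw [h2]
      field_simp
      ring_nf
      have hsq' : (-1:ℝ)^(n*2) = 1 := by rw [mul_comm, pow_mul]; norm_num
      rw [hsq']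
      ring
    rw [hP, Finset.sum_congr rfl hstep, ← Finset.sum_mul, choose_alt]
    have hn1 : ((n:ℝ)+1) ≠ 0 := by positivity
    by_cases h : m = n
    · subst h
      rw [if_pos rfl, if_pos rfl]
      push_cast
      field_simp
    · rw [if_neg h, if_neg (by omega)]
      ring
end
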